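/- Let (z_m)_{m ≥ 0} be a finitely supported sequence of integers, and define x_m = Σ_{j ≥ 0} C(m+2j, j) · z_{m+2j} for every m ≥ 0 (a finite sum). Then for every m ≥ 0, z_m = Σ_{k ≥ 0} (-1)^k · ( C(m+k, m) + C'(m+k-1, m) ) · x_{m+2k}, where C'(m+k-1, m) denotes C(m+k-1, m), interpreted as 0 in the degenerate case m = k = 0 (the convention C(-1,0) = 0), and the sum on the right is finite. -/

import Mathlib

open PowerSeries Finset

noncomputable def gS (m : ℕ) : PowerSeries ℤ :=
  PowerSeries.mk fun k => (-1 : ℤ) ^ k * ((m + k).choose k : ℤ)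

lemma gS_mul_X_add_one (m : ℕ) : gS (m + 1) * (1 + PowerSeries.X) = gS m := by
  ext n
  rw [mul_add, mul_one, map_add]
  cases n with
  | zero => simp [gS]
  | succ n =>
      rw [PowerSeries.coeff_succ_mul_X]
      simp only [gS, PowerSeries.coeff_mk]
      have h : (m + 1 + (n + 1)).choose (n + 1)
          = (m + 1 + n).choose n + (m + 1 + n).choose (n + 1) := by
        have e : m + 1 + (n + 1) = (m + 1 + n) + 1 := by ring
        rw [e, Nat.choose_succ_succ']
      have e2 : m + 1 + n = m + (n + 1) := by ring
      rw [h, e2]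
      push_cast
      ring

lemma gS_mul_pow (m : ℕ) : gS m * (1 + PowerSeries.X) ^ (m + 1) = 1 := by
  induction m with
  | zero =>
      rw [pow_one]
      have h0 : gS 0 = gS (0 + 1) * (1 + PowerSeries.X) := (gS_mul_X_add_one 0).symm
      -- direct computation instead
      ext n
      rw [mul_add, mul_one, map_add]
      cases n with
      | zero => simp [gS]
      | succ n =>
          rw [PowerSeries.coeff_succ_mul_X]
          simp [gS, pow_succ]
  | succ m ih =>
      rw [pow_succ']
      rw [show gS (m+1) * ((1 + PowerSeries.X) * (1 + PowerSeries.X) ^ (m+1))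
          = (gS (m+1) * (1 + PowerSeries.X)) * (1 + PowerSeries.X) ^ (m+1) by ring,
        gS_mul_X_add_one, ih]

lemma coeff_one_add_X_pow (d n : ℕ) :
    (PowerSeries.coeff (R := ℤ) n) ((1 + PowerSeries.X) ^ d) = (d.choose n : ℤ) := by
  induction d generalizing n with
  | zero => cases n <;> simp
  | succ d ih =>
      rw [pow_succ, mul_add, mul_one, map_add]
      cases n with
      | zero => simp [ih]
      | succ n =>
          rw [PowerSeries.coeff_succ_mul_X, ih, ih, Nat.choose_succ_succ']
          push_cast
          ring

/-- Key identity: `∑_{k=0}^n (-1)^k C(m+k,k) C(M, n-k) = C(M-m-1, n)` for `M ≥ m+1`. -/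
lemma key_identity (m M n : ℕ) (h : m + 1 ≤ M) :
    ∑ k ∈ range (n + 1),
      (-1 : ℤ) ^ k * ((m + k).choose k : ℤ) * (M.choose (n - k) : ℤ)
      = ((M - m - 1).choose n : ℤ) := by
  have hM : (1 + PowerSeries.X : PowerSeries ℤ) ^ M
      = (1 + PowerSeries.X) ^ (m + 1) * (1 + PowerSeries.X) ^ (M - m - 1) := by
    rw [← pow_add]
    congr 1
    omega
  have hmain : gS m * (1 + PowerSeries.X) ^ M = (1 + PowerSeries.X) ^ (M - m - 1) := by
    rw [hM, ← mul_assoc, gS_mul_pow, one_mul]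
  have := congrArg (PowerSeries.coeff (R := ℤ) n) hmain
  rw [PowerSeries.coeff_mul, Finset.Nat.sum_antidiagonal_eq_sum_range_succ_mk] at this
  simp only [gS, PowerSeries.coeff_mk, coeff_one_add_X_pow] at this
  simpa [mul_assoc] using this

/-- The triangular combinatorial identity. -/
lemma tri_identity (m n : ℕ) :
    ∑ k ∈ range (n + 1),
      (-1 : ℤ) ^ k *
        (((m + k).choose m : ℤ) +
          (if m = 0 ∧ k = 0 then 0 else ((m + k - 1).choose m : ℤ))) *
        (((m + 2 * n).choose (n - k) : ℤ))
      = if n = 0 then 1 else 0 := by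
  rcases Nat.eq_zero_or_pos n with hn | hn
  · subst hn
    rw [show (0 : ℕ) + 1 = 1 from rfl, Finset.sum_range_one]
    rcases Nat.eq_zero_or_pos m with hm | hm
    · subst hm; norm_num
    · rw [if_neg (by omega : ¬ (m = 0 ∧ 0 = 0)),
        Nat.choose_eq_zero_of_lt (by omega : m + 0 - 1 < m)]
      norm_num
  · have hsplit : ∀ k ∈ range (n + 1),
        (-1 : ℤ) ^ k *
          (((m + k).choose m : ℤ) +
            (if m = 0 ∧ k = 0 then 0 else ((m + k - 1).choose m : ℤ))) *
          (((m + 2 * n).choose (n - k) : ℤ))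
        = (-1 : ℤ) ^ k * ((m + k).choose k : ℤ) * ((m + 2 * n).choose (n - k) : ℤ)
          + (-1 : ℤ) ^ k *
            (if m = 0 ∧ k = 0 then 0 else ((m + k - 1).choose m : ℤ)) *
            ((m + 2 * n).choose (n - k) : ℤ) := by
      intro k _
      have : (m + k).choose m = (m + k).choose k := by
        rw [← Nat.choose_symm (by omega : m ≤ m + k)]
        congr 1
        omega
      rw [this]; ring
    rw [Finset.sum_congr rfl hsplit, Finset.sum_add_distrib]
    have h1 : ∑ k ∈ range (n + 1),
        (-1 : ℤ) ^ k * ((m + k).choose k : ℤ) * ((m + 2 * n).choose (n - k) : ℤ)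
        = ((2 * n - 1).choose n : ℤ) := by
      have := key_identity m (m + 2 * n) n (by omega)
      rw [this]
      congr 2
      omega
    have h2 : ∑ k ∈ range (n + 1),
        (-1 : ℤ) ^ k *
          (if m = 0 ∧ k = 0 then 0 else ((m + k - 1).choose m : ℤ)) *
          ((m + 2 * n).choose (n - k) : ℤ)
        = -((2 * n - 1).choose (n - 1) : ℤ) := by
      rw [Finset.sum_range_succ']
      have hz0 : (-1 : ℤ) ^ 0 *
          (if m = 0 ∧ 0 = 0 then 0 else ((m + 0 - 1).choose m : ℤ)) *
          ((m + 2 * n).choose (n - 0) : ℤ) = 0 := by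
        rcases Nat.eq_zero_or_pos m with hm | hm
        · subst hm; simp
        · rw [if_neg (by omega : ¬ (m = 0 ∧ 0 = 0)),
            Nat.choose_eq_zero_of_lt (by omega : m + 0 - 1 < m)]
          simp
      rw [hz0, add_zero]
      have hterm : ∀ j ∈ range n,
          (-1 : ℤ) ^ (j + 1) *
            (if m = 0 ∧ j + 1 = 0 then 0 else ((m + (j + 1) - 1).choose m : ℤ)) *
            ((m + 2 * n).choose (n - (j + 1)) : ℤ)
          = -((-1 : ℤ) ^ j * ((m + j).choose j : ℤ) * ((m + 2 * n).choose ((n-1) - j) : ℤ)) := by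
        intro j _
        have e1 : m + (j + 1) - 1 = m + j := by omega
        have e2 : n - (j + 1) = (n - 1) - j := by omega
        have e3 : (m + j).choose m = (m + j).choose j := by
          rw [← Nat.choose_symm (by omega : m ≤ m + j)]
          congr 1
          omega
        rw [if_neg (by omega : ¬ (m = 0 ∧ j + 1 = 0)), e1, e2, e3]
        ring
      rw [Finset.sum_congr rfl hterm, Finset.sum_neg_distrib, neg_inj]
      have hk := key_identity m (m + 2 * n) (n - 1) (by omega)
      rw [show (n - 1) + 1 = n by omega] at hk
      rw [hk, show m + 2 * n - m - 1 = 2 * n - 1 by omega]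
    rw [h1, h2]
    have : (2 * n - 1).choose (n - 1) = (2 * n - 1).choose n := by
      rw [← Nat.choose_symm (by omega : n ≤ 2 * n - 1)]
      congr 1
      omega
    rw [this, if_neg (by omega : ¬ n = 0)]
    ring

/-- Sequence inversion: if `z` is finitely supported and
`x m = Σ_{j ≥ 0} C(m+2j, j) z(m+2j)`, then
`z m = Σ_{k ≥ 0} (-1)^k (C(m+k, m) + C'(m+k-1, m)) x(m+2k)`,
where `C'(m+k-1, m)` is `C(m+k-1, m)`, interpreted as `0` when `m = k = 0`
(the convention `C(-1,0) = 0`). -/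
theorem sequence_inversion (z : ℕ → ℤ) (hz : (Function.support z).Finite)
    (x : ℕ → ℤ)
    (hx : ∀ m : ℕ, x m = ∑ᶠ j : ℕ, ((m + 2 * j).choose j : ℤ) * z (m + 2 * j)) :
    ∀ m : ℕ, z m = ∑ᶠ k : ℕ,
      (-1 : ℤ) ^ k *
        (((m + k).choose m : ℤ) +
          (if m = 0 ∧ k = 0 then 0 else ((m + k - 1).choose m : ℤ))) *
        x (m + 2 * k) := by
  obtain ⟨B, hB⟩ := hz.bddAbove
  set N := B + 1 with hN
  have hzN : ∀ n, N ≤ n → z n = 0 := by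
    intro n hn
    by_contra h
    have := hB (Function.mem_support.mpr h)
    omega
  have hxsum : ∀ m : ℕ, x m = ∑ j ∈ range N, ((m + 2 * j).choose j : ℤ) * z (m + 2 * j) := by
    intro m
    rw [hx m]
    apply finsum_eq_sum_of_support_subset
    intro j hj
    simp only [Function.mem_support, ne_eq] at hj
    have : z (m + 2 * j) ≠ 0 := fun h => hj (by rw [h, mul_zero])
    have hlt : m + 2 * j < N := by
      by_contra hge
      exact this (hzN _ (by omega))
    simp only [coe_range, Set.mem_Iio]
    omega
  have hxzero : ∀ m, N ≤ m → x m = 0 := by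
    intro m hm
    rw [hxsum m]
    apply Finset.sum_eq_zero
    intro j _
    rw [hzN (m + 2 * j) (by omega), mul_zero]
  intro m
  set A : ℕ → ℤ := fun k =>
    (-1 : ℤ) ^ k *
      (((m + k).choose m : ℤ) +
        (if m = 0 ∧ k = 0 then 0 else ((m + k - 1).choose m : ℤ))) with hA
  have hfin : ∑ᶠ k : ℕ, A k * x (m + 2 * k) = ∑ k ∈ range N, A k * x (m + 2 * k) := by
    apply finsum_eq_sum_of_support_subset
    intro k hk
    simp only [Function.mem_support, ne_eq] at hk
    have : x (m + 2 * k) ≠ 0 := fun h => hk (by rw [h, mul_zero])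
    have hlt : m + 2 * k < N := by
      by_contra hge
      exact this (hxzero _ (by omega))
    simp only [coe_range, Set.mem_Iio]
    omega
  show z m = ∑ᶠ k : ℕ, A k * x (m + 2 * k)
  rw [hfin]
  -- substitute x
  have step1 : ∑ k ∈ range N, A k * x (m + 2 * k)
      = ∑ k ∈ range N, ∑ j ∈ range N,
          A k * (((m + 2 * k + 2 * j).choose j : ℤ) * z (m + 2 * k + 2 * j)) := by
    refine Finset.sum_congr rfl fun k _ => ?_
    rw [hxsum (m + 2 * k), Finset.mul_sum]
  rw [step1]
  -- define f k n := A k * C(m+2n, n-k) * z(m+2n)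
  set f : ℕ → ℕ → ℤ := fun k n =>
    A k * (((m + 2 * n).choose (n - k) : ℤ) * z (m + 2 * n)) with hf
  have step2 : ∀ k ∈ range N, ∑ j ∈ range N,
      A k * (((m + 2 * k + 2 * j).choose j : ℤ) * z (m + 2 * k + 2 * j))
      = ∑ n ∈ Finset.Ico k N, f k n := by
    intro k hk
    have e1 : ∑ j ∈ range N,
        A k * (((m + 2 * k + 2 * j).choose j : ℤ) * z (m + 2 * k + 2 * j))
        = ∑ n ∈ Finset.Ico k (k + N), f k n := by
      rw [Finset.sum_Ico_eq_sum_range]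
      refine Finset.sum_congr (by congr 1; omega) fun j _ => ?_
      simp only [hf]
      have e : m + 2 * (k + j) = m + 2 * k + 2 * j := by ring
      have e' : k + j - k = j := by omega
      rw [e, e']
    rw [e1]
    apply (Finset.sum_subset (Finset.Ico_subset_Ico le_rfl (by omega)) ?_).symm
    intro n hn hn'
    simp only [Finset.mem_Ico] at hn hn'
    have : N ≤ n := by omega
    simp only [hf, hzN (m + 2 * n) (by omega), mul_zero, zero_mul]
  rw [Finset.sum_congr rfl step2]
  have hIco : ∑ k ∈ range N, ∑ n ∈ Finset.Ico k N, f k n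
      = ∑ n ∈ range N, ∑ k ∈ Finset.Ico 0 (n + 1), f k n := by
    simp only [Finset.range_eq_Ico]
    exact Finset.sum_Ico_Ico_comm 0 N f
  rw [hIco]
  have step3 : ∀ n ∈ range N, ∑ k ∈ Finset.Ico 0 (n + 1), f k n
      = (if n = 0 then 1 else 0) * z (m + 2 * n) := by
    intro n _
    rw [← Finset.range_eq_Ico]
    have : ∑ k ∈ range (n + 1), f k n
        = (∑ k ∈ range (n + 1),
            (-1 : ℤ) ^ k *
              (((m + k).choose m : ℤ) +
                (if m = 0 ∧ k = 0 then 0 else ((m + k - 1).choose m : ℤ))) *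
              ((m + 2 * n).choose (n - k) : ℤ)) * z (m + 2 * n) := by
      rw [Finset.sum_mul]
      refine Finset.sum_congr rfl fun k _ => ?_
      simp only [hf, hA]
      ring
    rw [this, tri_identity]
  rw [Finset.sum_congr rfl step3]
  have hN0 : 0 < N := by omega
  rw [Finset.sum_eq_single 0]
  · simp
  · intro n _ hn; simp [hn]
  · intro h; exact absurd (Finset.mem_range.mpr hN0) h
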